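/- Let α > 2β ≥ 0. The interval-exchange map F on Z₊ with interval lengths |Δ_{2m-1}| = (α-2β)m, |Δ_{2m}| = β(2m-1) and translations τ_{2m-1} = 4βm, τ_{2m} = (2β-α)(2m-1) (m ≥ 1) induces the permutation σ of N given by σ(2) = 1, σ(2n+2) = 2n, σ(2n-1) = 2n+1 for n ≥ 1. -/

import Mathlib

/-- The permutation σ: σ(2) = 1, σ(2n+2) = 2n, σ(2n-1) = 2n+1 for n ≥ 1. -/
def sigma10 (j : ℕ) : ℕ := if j = 2 then 1 else if j % 2 = 0 then j - 2 else j + 2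

/-- Interval lengths: |Δ_{2m-1}| = (α-2β)m, |Δ_{2m}| = β(2m-1). -/
def len10 (α β : ℤ) (k : ℕ) : ℤ :=
  if k % 2 = 1 then (α - 2 * β) * (((k : ℤ) + 1) / 2) else β * ((k : ℤ) - 1)

/-- Translations: τ_{2m-1} = 4βm, τ_{2m} = (2β-α)(2m-1). -/
def tau10 (α β : ℤ) (k : ℕ) : ℤ :=
  if k % 2 = 1 then 2 * β * ((k : ℤ) + 1) else (2 * β - α) * ((k : ℤ) - 1)

/-- Left endpoint of Δ_{j+1}: cumulative sum of lengths. -/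
def delta10 (α β : ℤ) (j : ℕ) : ℤ := ∑ i ∈ Finset.range j, len10 α β (i + 1)

lemma len_odd10 (α β : ℤ) (m : ℕ) : len10 α β (2*m+1) = (α - 2*β) * ((m:ℤ)+1) := by
  rw [len10, if_pos (by omega)]
  have h : ((2*m+1 : ℕ) : ℤ) + 1 = 2*((m:ℤ)+1) := by push_cast; ring
  rw [h]
  congr 1
  omega

lemma len_even10 (α β : ℤ) (m : ℕ) : len10 α β (2*m+2) = β * (2*(m:ℤ)+1) := by
  rw [len10, if_neg (by omega)]
  push_cast; ring

lemma tau_odd10 (α β : ℤ) (m : ℕ) : tau10 α β (2*m+1) = 2*β*(2*(m:ℤ)+2) := by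
  rw [tau10, if_pos (by omega)]
  push_cast; ring

lemma tau_even10 (α β : ℤ) (m : ℕ) : tau10 α β (2*m+2) = (2*β - α) * (2*(m:ℤ)+1) := by
  rw [tau10, if_neg (by omega)]
  push_cast; ring

lemma sumA10 (α β : ℤ) : ∀ m : ℕ,
    ∑ k ∈ (Finset.range (m+1)).filter (fun k => 1 ≤ k), len10 α β k = delta10 α β m := by
  intro m
  induction m with
  | zero => simp [delta10, Finset.filter_singleton]
  | succ m ih =>
    rw [Finset.range_add_one, Finset.filter_insert, if_pos (Nat.succ_le_succ (Nat.zero_le m)),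
      Finset.sum_insert (by simp), ih]
    simp only [delta10, Finset.sum_range_succ]
    ring

/-- The IET sends the left endpoint of Δ_j to the sum of the lengths of the intervals
whose image position precedes σ(j); i.e. F induces the permutation σ. -/
theorem stmt10 (α β : ℤ) (hβ : 0 ≤ β) (hαβ : 2 * β < α) (j : ℕ) (hj : 1 ≤ j) :
    delta10 α β (j - 1) + tau10 α β j =
      ∑ k ∈ (Finset.range (sigma10 j + 3)).filter
          (fun k => 1 ≤ k ∧ sigma10 k < sigma10 j), len10 α β k := by
  have dsucc : ∀ m : ℕ, delta10 α β (m+1) = delta10 α β m + len10 α β (m+1) := by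
    intro m; simp only [delta10, Finset.sum_range_succ]
  have hcases : (∃ n, j = 2*n+1) ∨ j = 2 ∨ (∃ n, j = 2*n+4) := by
    rcases Nat.even_or_odd j with h | h
    · obtain ⟨n, hn⟩ := h
      rcases Nat.lt_or_ge n 2 with h2 | h2
      · right; left; omega
      · right; right; exact ⟨n-2, by omega⟩
    · obtain ⟨n, hn⟩ := h; left; exact ⟨n, by omega⟩
  rcases hcases with ⟨n, rfl⟩ | rfl | ⟨n, rfl⟩
  · -- j = 2n+1 odd
    have hs : sigma10 (2*n+1) = 2*n+3 := by unfold sigma10; split_ifs <;> omega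
    simp only [hs]
    have hset : (Finset.range (2*n+3 + 3)).filter
          (fun k => 1 ≤ k ∧ sigma10 k < 2*n+3)
        = (((Finset.range (2*n+4+1)).filter (fun k => 1 ≤ k)).erase (2*n+1)).erase (2*n+3) := by
      ext k
      simp only [Finset.mem_filter, Finset.mem_range, Finset.mem_erase]
      unfold sigma10
      split_ifs <;> omega
    rw [hset,
      Finset.sum_erase_eq_sub (by simp only [Finset.mem_erase, Finset.mem_filter, Finset.mem_range]; omega),
      Finset.sum_erase_eq_sub (by simp only [Finset.mem_filter, Finset.mem_range]; omega),
      sumA10]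
    have e : delta10 α β (2*n+4) = delta10 α β (2*n) + len10 α β (2*n+1) + len10 α β (2*n+2)
        + len10 α β (2*n+3) + len10 α β (2*n+4) := by
      rw [show 2*n+4 = (2*n+3)+1 by omega, dsucc, show 2*n+3 = (2*n+2)+1 by omega, dsucc,
        show 2*n+2 = (2*n+1)+1 by omega, dsucc, dsucc]
    have l1 : len10 α β (2*n+1) = (α - 2*β) * ((n:ℤ)+1) := len_odd10 α β n
    have l2 : len10 α β (2*n+2) = β * (2*(n:ℤ)+1) := len_even10 α β n
    have l3 : len10 α β (2*n+3) = (α - 2*β) * ((n:ℤ)+2) := by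
      rw [show 2*n+3 = 2*(n+1)+1 by omega, len_odd10]; push_cast; ring
    have l4 : len10 α β (2*n+4) = β * (2*(n:ℤ)+3) := by
      rw [show 2*n+4 = 2*(n+1)+2 by omega, len_even10]; push_cast; ring
    have t1 : tau10 α β (2*n+1) = 2*β*(2*(n:ℤ)+2) := tau_odd10 α β n
    rw [show 2*n+1-1 = 2*n by omega, e, l1, l2, l3, l4, t1]
    ring
  · -- j = 2
    have hset : (Finset.range (sigma10 2 + 3)).filter
        (fun k => 1 ≤ k ∧ sigma10 k < sigma10 2) = ∅ := by decide
    rw [hset, Finset.sum_empty]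
    show delta10 α β 1 + tau10 α β 2 = 0
    have : delta10 α β 1 = len10 α β 1 := by
      simp [delta10]
    rw [this, show (1:ℕ) = 2*0+1 by omega, show (2:ℕ) = 2*0+2 by omega, len_odd10, tau_even10]
    push_cast; ring
  · -- j = 2n+4 even
    have hs : sigma10 (2*n+4) = 2*n+2 := by unfold sigma10; split_ifs <;> omega
    simp only [hs]
    have hset : (Finset.range (2*n+2 + 3)).filter
          (fun k => 1 ≤ k ∧ sigma10 k < 2*n+2)
        = ((Finset.range (2*n+2+1)).filter (fun k => 1 ≤ k)).erase (2*n+1) := by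
      ext k
      simp only [Finset.mem_filter, Finset.mem_range, Finset.mem_erase]
      unfold sigma10
      split_ifs <;> omega
    rw [hset,
      Finset.sum_erase_eq_sub (by simp only [Finset.mem_filter, Finset.mem_range]; omega),
      sumA10]
    rw [show 2*n+4-1 = (2*n+2)+1 by omega, dsucc]
    have l1 : len10 α β (2*n+1) = (α - 2*β) * ((n:ℤ)+1) := len_odd10 α β n
    have l3 : len10 α β (2*n+2+1) = (α - 2*β) * ((n:ℤ)+2) := by
      rw [show 2*n+2+1 = 2*(n+1)+1 by omega, len_odd10]; push_cast; ring
    have t1 : tau10 α β (2*n+4) = (2*β - α) * (2*(n:ℤ)+3) := by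
      rw [show 2*n+4 = 2*(n+1)+2 by omega, tau_even10]; push_cast; ring
    rw [l1, l3, t1]
    ring
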